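/- For real d > 0, define Φ(d) := d/((1+d)² · (1 + 1/(e^d − 1))). Then Φ is maximized at the unique positive solution d* of e^d(d−1) − d² − 2d + 1 = 0, this d* lies in (1.9, 2), and Φ(d*) > 0.192. -/

import Mathlib

open Real Set

noncomputable def G (x : ℝ) : ℝ := Real.exp x * (x - 1) - x ^ 2 - 2 * x + 1
noncomputable def G1 (x : ℝ) : ℝ := Real.exp x * x - 2 * x - 2
noncomputable def G2 (x : ℝ) : ℝ := Real.exp x * (x + 1) - 2
noncomputable def F (x : ℝ) : ℝ := x * (1 - Real.exp (-x)) / (1 + x) ^ 2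
noncomputable def Fd (x : ℝ) : ℝ := -G x * Real.exp (-x) / (1 + x) ^ 3

lemma contG : Continuous G := by unfold G; continuity
lemma contG1 : Continuous G1 := by unfold G1; continuity
lemma contG2 : Continuous G2 := by unfold G2; continuity

lemma hasDerivAt_G (x : ℝ) : HasDerivAt G (G1 x) x := by
  have h1 : HasDerivAt (fun y : ℝ => Real.exp y * (y - 1))
      (Real.exp x * (x - 1) + Real.exp x * 1) x :=
    (Real.hasDerivAt_exp x).mul ((hasDerivAt_id x).sub_const 1)
  have h2 : HasDerivAt (fun y : ℝ => y ^ 2) (2 * x) x := by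
    simpa using hasDerivAt_pow 2 x
  have h3 : HasDerivAt (fun y : ℝ => 2 * y) 2 x := by
    simpa using (hasDerivAt_id x).const_mul (2:ℝ)
  have := (((h1.sub h2).sub h3).add_const 1)
  refine this.congr_deriv ?_
  unfold G1; ring

lemma hasDerivAt_G1 (x : ℝ) : HasDerivAt G1 (G2 x) x := by
  have h1 : HasDerivAt (fun y : ℝ => Real.exp y * y)
      (Real.exp x * x + Real.exp x * 1) x :=
    (Real.hasDerivAt_exp x).mul (hasDerivAt_id x)
  have h3 : HasDerivAt (fun y : ℝ => 2 * y) 2 x := by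
    simpa using (hasDerivAt_id x).const_mul (2:ℝ)
  have := ((h1.sub h3).sub_const 2)
  refine this.congr_deriv ?_
  unfold G2; ring

lemma hasDerivAt_G2 (x : ℝ) : HasDerivAt G2 (Real.exp x * (x + 2)) x := by
  have h1 : HasDerivAt (fun y : ℝ => Real.exp y * (y + 1))
      (Real.exp x * (x + 1) + Real.exp x * 1) x :=
    (Real.hasDerivAt_exp x).mul ((hasDerivAt_id x).add_const 1)
  have := h1.sub_const 2
  refine this.congr_deriv ?_
  ring

lemma hasDerivAt_F {x : ℝ} (hx : (1:ℝ) + x ≠ 0) : HasDerivAt F (Fd x) x := by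
  have he : HasDerivAt (fun y : ℝ => Real.exp (-y)) (-Real.exp (-x)) x := by
    exact ((Real.hasDerivAt_exp (-x)).comp x (hasDerivAt_neg x)).congr_deriv (by ring)
  have hN : HasDerivAt (fun y : ℝ => y * (1 - Real.exp (-y)))
      (1 * (1 - Real.exp (-x)) + x * Real.exp (-x)) x := by
    have := (hasDerivAt_id x).mul ((hasDerivAt_const x (1:ℝ)).sub he)
    simp only [id] at this
    exact this.congr_deriv (by simp only [Pi.sub_apply]; ring)
  have hD : HasDerivAt (fun y : ℝ => (1 + y) ^ 2) (2 * (1 + x) ^ 1 * 1) x := by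
    exact (((hasDerivAt_id x).const_add 1).pow 2)
  have hD2 : ((1:ℝ) + x) ^ 2 ≠ 0 := pow_ne_zero _ hx
  have h := hN.div hD hD2
  refine h.congr_deriv ?_
  unfold Fd G
  have hex : Real.exp x = (Real.exp (-x))⁻¹ := by rw [Real.exp_neg, inv_inv]
  rw [hex]
  have hEne : Real.exp (-x) ≠ 0 := (Real.exp_pos _).ne'
  field_simp
  ring

lemma exp2_eq : Real.exp 2 = Real.exp 1 * Real.exp 1 := by
  rw [← Real.exp_add]; norm_num

lemma exp2_lb : (7.389056 : ℝ) < Real.exp 2 := by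
  rw [exp2_eq]; nlinarith [Real.exp_one_gt_d9]

lemma exp2_ub : Real.exp 2 < 7.3890562 := by
  rw [exp2_eq]; nlinarith [Real.exp_one_lt_d9, Real.exp_pos 1]

lemma exp01_lb : (1.1 : ℝ) ≤ Real.exp 0.1 := by
  have := Real.add_one_le_exp (0.1 : ℝ); linarith

lemma exp0025_ub : Real.exp 0.025 ≤ 40/39 := by
  have h := Real.add_one_le_exp (-0.025 : ℝ)
  rw [Real.exp_neg] at h
  have hp := Real.exp_pos (0.025:ℝ)
  have h2 : Real.exp 0.025 * (Real.exp 0.025)⁻¹ = 1 := mul_inv_cancel₀ hp.ne'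
  nlinarith

lemma exp01_ub : Real.exp 0.1 ≤ (40/39)^4 := by
  have h : Real.exp 0.1 = (Real.exp 0.025) ^ (4:ℕ) := by
    rw [← Real.exp_nat_mul]; norm_num
  rw [h]
  have := exp0025_ub
  have hp := (Real.exp_pos (0.025:ℝ)).le
  gcongr

lemma exp19_eq : Real.exp 1.9 * Real.exp 0.1 = Real.exp 2 := by
  rw [← Real.exp_add]; norm_num

lemma exp19_lb : (6.677 : ℝ) < Real.exp 1.9 := by
  have h1 := exp01_ub
  have h2 := exp2_lb
  have h3 := exp19_eq
  have hp := Real.exp_pos (0.1:ℝ)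
  nlinarith

lemma exp19_ub : Real.exp 1.9 < 6.72 := by
  have h1 := exp01_lb
  have h2 := exp2_ub
  have h3 := exp19_eq
  have hp := Real.exp_pos (1.9:ℝ)
  nlinarith

lemma G_zero : G 0 = 0 := by unfold G; simp
lemma G1_zero : G1 0 = -2 := by unfold G1; simp
lemma G2_zero : G2 0 = -1 := by unfold G2; simp; norm_num
lemma G2_one : 0 < G2 1 := by
  unfold G2
  nlinarith [Real.exp_one_gt_d9]
lemma G1_19 : 0 < G1 1.9 := by
  unfold G1
  nlinarith [exp19_lb]
lemma G_19 : G 1.9 < 0 := by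
  unfold G
  nlinarith [exp19_ub, Real.exp_pos (1.9:ℝ)]
lemma G_two : 0 < G 2 := by
  unfold G
  nlinarith [exp2_lb]

lemma G2_strictMonoOn : StrictMonoOn G2 (Ici 0) := by
  apply strictMonoOn_of_deriv_pos (convex_Ici 0) contG2.continuousOn
  intro x hx
  rw [interior_Ici] at hx
  rw [(hasDerivAt_G2 x).deriv]
  have := Real.exp_pos x
  nlinarith [(Set.mem_Ioi.mp hx).le]

lemma key : ∃ d : ℝ, d ∈ Ioo (1.9:ℝ) 2 ∧ G d = 0 ∧
    (∀ x, 0 < x → x < d → G x < 0) ∧ (∀ x, d < x → 0 < G x) := by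
  obtain ⟨c1, hc1mem, hc1⟩ : ∃ c1 ∈ Ioo (0:ℝ) 1, G2 c1 = 0 := by
    have h := intermediate_value_Ioo (by norm_num : (0:ℝ) ≤ 1) contG2.continuousOn
    have h0 : (0:ℝ) ∈ Ioo (G2 0) (G2 1) := by
      rw [G2_zero]; exact ⟨by norm_num, G2_one⟩
    obtain ⟨c1, hmem, hval⟩ := h h0
    exact ⟨c1, hmem, hval⟩
  have hc1pos : 0 < c1 := hc1mem.1
  have hG2neg : ∀ x, 0 ≤ x → x < c1 → G2 x < 0 := by
    intro x hx hxc
    have := G2_strictMonoOn hx (le_of_lt hc1pos) hxc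
    linarith [hc1 ▸ this]
  have hG2pos : ∀ x, c1 < x → 0 < G2 x := by
    intro x hxc
    have := G2_strictMonoOn (le_of_lt hc1pos) (le_trans (le_of_lt hc1pos) (le_of_lt hxc)) hxc
    linarith [hc1 ▸ this]
  have hG1anti : StrictAntiOn G1 (Icc 0 c1) := by
    apply strictAntiOn_of_deriv_neg (convex_Icc 0 c1) contG1.continuousOn
    intro x hx
    rw [interior_Icc] at hx
    rw [(hasDerivAt_G1 x).deriv]
    exact hG2neg x hx.1.le hx.2
  have hG1mono : StrictMonoOn G1 (Ici c1) := by
    apply strictMonoOn_of_deriv_pos (convex_Ici c1) contG1.continuousOn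
    intro x hx
    rw [interior_Ici] at hx
    rw [(hasDerivAt_G1 x).deriv]
    exact hG2pos x hx
  have hG1c1 : G1 c1 < 0 := by
    have := hG1anti (left_mem_Icc.2 hc1pos.le) ⟨hc1pos.le, le_refl c1⟩ hc1pos
    rw [G1_zero] at this; linarith
  obtain ⟨c2, hc2mem, hc2⟩ : ∃ c2 ∈ Ioo c1 (1.9:ℝ), G1 c2 = 0 := by
    have h := intermediate_value_Ioo (by linarith [hc1mem.2] : c1 ≤ (1.9:ℝ)) contG1.continuousOn
    have h0 : (0:ℝ) ∈ Ioo (G1 c1) (G1 1.9) := ⟨hG1c1, G1_19⟩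
    obtain ⟨c2, hmem, hval⟩ := h h0
    exact ⟨c2, hmem, hval⟩
  have hc2pos : 0 < c2 := lt_trans hc1pos hc2mem.1
  have hG1neg : ∀ x, 0 ≤ x → x < c2 → G1 x < 0 := by
    intro x hx hxc
    rcases le_or_gt x c1 with h | h
    · rcases eq_or_lt_of_le hx with h0 | h0
      · rw [← h0, G1_zero]; norm_num
      · have := hG1anti (left_mem_Icc.2 hc1pos.le) ⟨hx, h⟩ h0
        rw [G1_zero] at this; linarith
    · have := hG1mono h.le (le_trans h.le hxc.le) hxc
      linarith [hc2 ▸ this]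
  have hG1pos : ∀ x, c2 < x → 0 < G1 x := by
    intro x hxc
    have := hG1mono hc2mem.1.le (le_trans hc2mem.1.le hxc.le) hxc
    linarith [hc2 ▸ this]
  have hGanti : StrictAntiOn G (Icc 0 c2) := by
    apply strictAntiOn_of_deriv_neg (convex_Icc 0 c2) contG.continuousOn
    intro x hx
    rw [interior_Icc] at hx
    rw [(hasDerivAt_G x).deriv]
    exact hG1neg x hx.1.le hx.2
  have hGmono : StrictMonoOn G (Ici c2) := by
    apply strictMonoOn_of_deriv_pos (convex_Ici c2) contG.continuousOn
    intro x hx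
    rw [interior_Ici] at hx
    rw [(hasDerivAt_G x).deriv]
    exact hG1pos x hx
  have hGneg : ∀ x, 0 < x → x ≤ c2 → G x < 0 := by
    intro x hx hxc
    have := hGanti (left_mem_Icc.2 hc2pos.le) ⟨hx.le, hxc⟩ hx
    rw [G_zero] at this; linarith
  have hc219 : c2 < 1.9 := hc2mem.2
  obtain ⟨d, hdmem, hd⟩ : ∃ d ∈ Ioo (1.9:ℝ) 2, G d = 0 := by
    have h := intermediate_value_Ioo (by norm_num : (1.9:ℝ) ≤ 2) contG.continuousOn
    have h0 : (0:ℝ) ∈ Ioo (G 1.9) (G 2) := ⟨G_19, G_two⟩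
    obtain ⟨d, hmem, hval⟩ := h h0
    exact ⟨d, hmem, hval⟩
  refine ⟨d, hdmem, hd, ?_, ?_⟩
  · intro x hx hxd
    rcases le_or_gt x c2 with h | h
    · exact hGneg x hx h
    · have := hGmono h.le (le_trans h.le hxd.le) hxd
      rw [hd] at this; linarith
  · intro x hxd
    have hdc2 : c2 ≤ d := by linarith [hdmem.1]
    have := hGmono hdc2 (le_trans hdc2 hxd.le) hxd
    rw [hd] at this; linarith

lemma F_eq {x : ℝ} (hx : 0 < x) :
    x / ((1 + x) ^ 2 * (1 + 1 / (Real.exp x - 1))) = F x := by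
  have h1 : 1 < Real.exp x := by
    rw [← Real.exp_zero]; exact Real.exp_lt_exp.2 hx
  have h2 : Real.exp x - 1 ≠ 0 := by linarith
  have h3 : (1:ℝ) + x ≠ 0 := by positivity
  have h4 : Real.exp x ≠ 0 := by positivity
  unfold F
  rw [Real.exp_neg]
  field_simp
  ring

lemma F19 : (0.192:ℝ) < F 1.9 := by
  unfold F
  have h := exp19_lb
  have hp := Real.exp_pos (1.9:ℝ)
  have hip := inv_pos.2 hp
  have hc : Real.exp 1.9 * (Real.exp 1.9)⁻¹ = 1 := mul_inv_cancel₀ hp.ne'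
  rw [Real.exp_neg, lt_div_iff₀ (by norm_num : (0:ℝ) < (1 + 1.9) ^ 2)]
  nlinarith

lemma F_mono {d : ℝ} (hd19 : 1.9 < d) (hneg : ∀ x, 0 < x → x < d → G x < 0) :
    MonotoneOn F (Icc 0 d) := by
  have hne : ∀ x : ℝ, x ∈ Icc (0:ℝ) d → (1:ℝ) + x ≠ 0 := by
    intro x hx; have := hx.1; positivity
  apply monotoneOn_of_deriv_nonneg (convex_Icc 0 d)
  · intro x hx
    exact (hasDerivAt_F (hne x hx)).continuousAt.continuousWithinAt
  · intro x hx
    rw [interior_Icc] at hx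
    exact (hasDerivAt_F (hne x ⟨hx.1.le, hx.2.le⟩)).differentiableAt.differentiableWithinAt
  · intro x hx
    rw [interior_Icc] at hx
    rw [(hasDerivAt_F (hne x ⟨hx.1.le, hx.2.le⟩)).deriv]
    unfold Fd
    have hg := hneg x hx.1 hx.2
    have he := Real.exp_pos (-x)
    have h3 : (0:ℝ) < (1 + x) ^ 3 := by have := hx.1; positivity
    apply div_nonneg _ h3.le
    nlinarith

lemma F_anti {d : ℝ} (hd19 : 1.9 < d) (hpos : ∀ x, d < x → 0 < G x) :
    AntitoneOn F (Ici d) := by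
  have hne : ∀ x : ℝ, x ∈ Ici d → (1:ℝ) + x ≠ 0 := by
    intro x hx; have : d ≤ x := hx; nlinarith
  apply antitoneOn_of_deriv_nonpos (convex_Ici d)
  · intro x hx
    exact (hasDerivAt_F (hne x hx)).continuousAt.continuousWithinAt
  · intro x hx
    rw [interior_Ici] at hx
    exact (hasDerivAt_F (hne x (Set.mem_Ioi.mp hx).le)).differentiableAt.differentiableWithinAt
  · intro x hx
    rw [interior_Ici] at hx
    rw [(hasDerivAt_F (hne x (Set.mem_Ioi.mp hx).le)).deriv]
    unfold Fd
    have hdx : d < x := hx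
    have hg := hpos x hdx
    have he := Real.exp_pos (-x)
    have h1x : (0:ℝ) < 1 + x := by linarith
    have h3 : (0:ℝ) < (1 + x) ^ 3 := by positivity
    apply div_nonpos_of_nonpos_of_nonneg _ h3.le
    nlinarith

theorem stmt_16 :
    (∃! d : ℝ, 0 < d ∧ Real.exp d * (d - 1) - d ^ 2 - 2 * d + 1 = 0) ∧
      ∀ d : ℝ, 0 < d → Real.exp d * (d - 1) - d ^ 2 - 2 * d + 1 = 0 →
        d ∈ Set.Ioo (1.9 : ℝ) 2 ∧
        (0.192 : ℝ) < d / ((1 + d) ^ 2 * (1 + 1 / (Real.exp d - 1))) ∧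
        ∀ d' : ℝ, 0 < d' →
          d' / ((1 + d') ^ 2 * (1 + 1 / (Real.exp d' - 1))) ≤
            d / ((1 + d) ^ 2 * (1 + 1 / (Real.exp d - 1))) := by
  obtain ⟨d0, hd0mem, hd0, hneg, hpos⟩ := key
  have hd0pos : 0 < d0 := by linarith [hd0mem.1]
  have huniq : ∀ d : ℝ, 0 < d → G d = 0 → d = d0 := by
    intro d hd hG
    rcases lt_trichotomy d d0 with h | h | h
    · exact absurd hG (ne_of_lt (hneg d hd h))
    · exact h
    · exact absurd hG (ne_of_gt (hpos d h))
  constructor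
  · refine ⟨d0, ⟨hd0pos, by simpa [G] using hd0⟩, ?_⟩
    intro d hd
    exact huniq d hd.1 (by simpa [G] using hd.2)
  · intro d hd hGd
    have hdd0 : d = d0 := huniq d hd (by simpa [G] using hGd)
    subst hdd0
    refine ⟨hd0mem, ?_, ?_⟩
    · rw [F_eq hd]
      have h19 : F 1.9 ≤ F d :=
        F_mono hd0mem.1 hneg ⟨by norm_num, by linarith [hd0mem.1]⟩ ⟨hd.le, le_refl d⟩
          (by linarith [hd0mem.1])
      linarith [F19]
    · intro d' hd'
      rw [F_eq hd, F_eq hd']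
      rcases le_total d' d with h | h
      · exact F_mono hd0mem.1 hneg ⟨hd'.le, h⟩ ⟨hd.le, le_refl d⟩ h
      · exact F_anti hd0mem.1 hpos (le_refl d) h h
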